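/- arXiv:1812.02878 — 5 statements merged into one kernel-verified Lean document; each statement's English description precedes it below -/
import Mathlib

section
/- Under the PL-game assumptions (each h_θ(α) = −f(θ, α) is μ-PL with attained maximum, A(θ) = argmax_α f(θ, α) nonempty and closed, and the gradient Lipschitz continuity assumptions with constants L₁₁, L₂₂, L₁₂), for any θ and any two maximizers α₁, α₂ ∈ A(θ), the partial gradients with respect to θ coincide: ∇_θ f(θ, α₁) = ∇_θ f(θ, α₂). -/
/-- Under the PL-game assumptions, for any `θ` the partial gradient `∇_θ f(θ, ·)` is
constant on the set of maximizers `A(θ)`: `∇_θ f(θ, α₁) = ∇_θ f(θ, α₂)` for all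
`α₁, α₂ ∈ A(θ)`. -/
theorem grad_theta_constant_on_argmax
    (m n : ℕ)
    (f : EuclideanSpace ℝ (Fin m) × EuclideanSpace ℝ (Fin n) → ℝ)
    (μ L₁₁ L₂₂ L₁₂ : ℝ) (g : EuclideanSpace ℝ (Fin m) → ℝ)
    (hμ : 0 < μ)
    (hf : ContDiff ℝ 2 f)
    (hL11 : ∀ (α : EuclideanSpace ℝ (Fin n)) (θ₁ θ₂ : EuclideanSpace ℝ (Fin m)),
      ‖gradient (fun t => f (t, α)) θ₁ - gradient (fun t => f (t, α)) θ₂‖ ≤ L₁₁ * ‖θ₁ - θ₂‖)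
    (hL22 : ∀ (θ : EuclideanSpace ℝ (Fin m)) (α₁ α₂ : EuclideanSpace ℝ (Fin n)),
      ‖gradient (fun a => f (θ, a)) α₁ - gradient (fun a => f (θ, a)) α₂‖ ≤ L₂₂ * ‖α₁ - α₂‖)
    (hL12a : ∀ (α : EuclideanSpace ℝ (Fin n)) (θ₁ θ₂ : EuclideanSpace ℝ (Fin m)),
      ‖gradient (fun a => f (θ₁, a)) α - gradient (fun a => f (θ₂, a)) α‖ ≤ L₁₂ * ‖θ₁ - θ₂‖)
    (hL12b : ∀ (θ : EuclideanSpace ℝ (Fin m)) (α₁ α₂ : EuclideanSpace ℝ (Fin n)),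
      ‖gradient (fun t => f (t, α₁)) θ - gradient (fun t => f (t, α₂)) θ‖ ≤ L₁₂ * ‖α₁ - α₂‖)
    (hub : ∀ θ α, f (θ, α) ≤ g θ)
    (hattained : ∀ θ, ∃ α, f (θ, α) = g θ)
    (hclosed : ∀ θ, IsClosed {α | f (θ, α) = g θ})
    (hPL : ∀ θ α, μ * (g θ - f (θ, α)) ≤ (1 / 2) * ‖gradient (fun a => f (θ, a)) α‖ ^ 2) :
    ∀ (θ : EuclideanSpace ℝ (Fin m)) (α₁ α₂ : EuclideanSpace ℝ (Fin n)),
      f (θ, α₁) = g θ → f (θ, α₂) = g θ →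
      gradient (fun t => f (t, α₁)) θ = gradient (fun t => f (t, α₂)) θ := by
  intro θ α₁ α₂ h₁ h₂
  have hdf : Differentiable ℝ f := hf.differentiable (by norm_num)
  -- differentiability of partial maps
  have hdiffθ : ∀ α : EuclideanSpace ℝ (Fin n),
      Differentiable ℝ (fun t : EuclideanSpace ℝ (Fin m) => f (t, α)) := fun α =>
    hdf.comp (differentiable_id.prodMk (differentiable_const α))
  have hdiffα : ∀ θ' : EuclideanSpace ℝ (Fin m),
      Differentiable ℝ (fun a : EuclideanSpace ℝ (Fin n) => f (θ', a)) := fun θ' =>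
    hdf.comp ((differentiable_const θ').prodMk differentiable_id)
  -- gradient in α vanishes at maximizers
  have hgradzero : ∀ α : EuclideanSpace ℝ (Fin n), f (θ, α) = g θ →
      gradient (fun a => f (θ, a)) α = 0 := by
    intro α hα
    have hmax : IsLocalMax (fun a => f (θ, a)) α := by
      apply Filter.Eventually.of_forall
      intro a
      simp only [hα]
      exact hub θ a
    have : fderiv ℝ (fun a => f (θ, a)) α = 0 := hmax.fderiv_eq_zero
    rw [gradient, this, map_zero]
  -- key quadratic bound
  set C : ℝ := L₁₂ ^ 2 / (2 * μ) with hC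
  have hCnn : 0 ≤ C := by positivity
  have key : ∀ (α : EuclideanSpace ℝ (Fin n)), f (θ, α) = g θ →
      ∀ θ' : EuclideanSpace ℝ (Fin m), g θ' - f (θ', α) ≤ C * ‖θ' - θ‖ ^ 2 := by
    intro α hα θ'
    have hg0 := hgradzero α hα
    have hnb : ‖gradient (fun a => f (θ', a)) α‖ ≤ L₁₂ * ‖θ' - θ‖ := by
      have := hL12a α θ' θ
      rwa [hg0, sub_zero] at this
    have hsq : ‖gradient (fun a => f (θ', a)) α‖ ^ 2 ≤ (L₁₂ * ‖θ' - θ‖) ^ 2 :=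
      pow_le_pow_left₀ (norm_nonneg _) hnb 2
    have hpl := hPL θ' α
    have h1 : μ * (g θ' - f (θ', α)) ≤ (1 / 2) * (L₁₂ * ‖θ' - θ‖) ^ 2 :=
      hpl.trans (by nlinarith)
    rw [hC, div_mul_eq_mul_div, le_div_iff₀ (by positivity)]
    nlinarith [h1, hμ]
  -- the difference function is O(‖θ' - θ‖²), hence has zero derivative at θ
  set φ : EuclideanSpace ℝ (Fin m) → ℝ := fun t => f (t, α₁) - f (t, α₂) with hφ
  have hφbound : ∀ θ', |φ θ'| ≤ C * ‖θ' - θ‖ ^ 2 := by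
    intro θ'
    rw [abs_le]
    constructor
    · have h := key α₁ h₁ θ'
      have h' := hub θ' α₂
      simp only [hφ]; linarith
    · have h := key α₂ h₂ θ'
      have h' := hub θ' α₁
      simp only [hφ]; linarith
  have hzero : HasFDerivAt φ (0 : EuclideanSpace ℝ (Fin m) →L[ℝ] ℝ) θ := by
    rw [hasFDerivAt_iff_isLittleO_nhds_zero]
    rw [Asymptotics.isLittleO_iff]
    intro c hc
    have hφθ : φ θ = 0 := by simp [hφ, h₁, h₂]
    have hball : ∀ᶠ h in nhds (0 : EuclideanSpace ℝ (Fin m)), ‖h‖ < c / (C + 1) := by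
      have : (0:ℝ) < c / (C + 1) := by positivity
      have := Metric.ball_mem_nhds (0 : EuclideanSpace ℝ (Fin m)) this
      filter_upwards [this] with h hh
      simpa [dist_eq_norm] using hh
    filter_upwards [hball] with h hh
    simp only [hφθ, ContinuousLinearMap.zero_apply, sub_zero]
    have hb := hφbound (θ + h)
    have : ‖θ + h - θ‖ = ‖h‖ := by congr 1; abel
    rw [this] at hb
    calc ‖φ (θ + h)‖ = |φ (θ + h)| := rfl
      _ ≤ C * ‖h‖ ^ 2 := hb
      _ = (C * ‖h‖) * ‖h‖ := by ring
      _ ≤ c * ‖h‖ := by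
          apply mul_le_mul_of_nonneg_right _ (norm_nonneg h)
          have h1 : C * ‖h‖ ≤ C * (c / (C + 1)) :=
            mul_le_mul_of_nonneg_left hh.le hCnn
          have h2 : C * (c / (C + 1)) ≤ c := by
            rw [mul_div_assoc']
            rw [div_le_iff₀ (by positivity)]
            nlinarith
          linarith
  -- derivatives of the partial maps
  have hd1 : HasFDerivAt (fun t => f (t, α₁)) (fderiv ℝ (fun t => f (t, α₁)) θ) θ :=
    (hdiffθ α₁ θ).hasFDerivAt
  have hd2 : HasFDerivAt (fun t => f (t, α₂)) (fderiv ℝ (fun t => f (t, α₂)) θ) θ :=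
    (hdiffθ α₂ θ).hasFDerivAt
  have hsub : HasFDerivAt φ
      (fderiv ℝ (fun t => f (t, α₁)) θ - fderiv ℝ (fun t => f (t, α₂)) θ) θ := hd1.sub hd2
  have heq : fderiv ℝ (fun t => f (t, α₁)) θ = fderiv ℝ (fun t => f (t, α₂)) θ := by
    have := hsub.unique hzero
    rwa [sub_eq_zero] at this
  rw [gradient, gradient, heq]
end

section
/- Under the PL-game assumptions, the function g(θ) = max_α f(θ, α) is differentiable with ∇g(θ) = ∇_θ f(θ, α) for every α ∈ A(θ) (a Danskin-type result): for each θ and each α ∈ A(θ), the map θ ↦ g(θ) has gradient ∇_θ f(θ, α) at θ. -/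
open Set Filter Real
open scoped RealInnerProductSpace Topology

set_option maxHeartbeats 1000000


lemma taylor_bound {E : Type*} [NormedAddCommGroup E] [InnerProductSpace ℝ E] [CompleteSpace E]
    (φ : E → ℝ) (hφ : Differentiable ℝ φ) (L : ℝ) (hL : 0 ≤ L)
    (hLip : ∀ x y, ‖gradient φ x - gradient φ y‖ ≤ L * ‖x - y‖) (x h : E) :
    abs (φ (x + h) - φ x - ⟪gradient φ x, h⟫) ≤ L * ‖h‖ ^ 2 := by
  set χ : ℝ → ℝ := fun t => φ (x + t • h) - t * ⟪gradient φ x, h⟫ with hχ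
  have hline : ∀ t : ℝ, HasDerivAt (fun s : ℝ => x + s • h) h t := by
    intro t
    simpa using ((hasDerivAt_id t).smul_const h).const_add x
  have hd : ∀ t : ℝ, HasDerivAt χ
      (⟪gradient φ (x + t • h), h⟫ - ⟪gradient φ x, h⟫) t := by
    intro t
    have h1 : HasDerivAt (fun s : ℝ => φ (x + s • h)) ⟪gradient φ (x + t • h), h⟫ t := by
      have hg := ((hφ (x + t • h)).hasGradientAt).hasFDerivAt
      exact hg.comp_hasDerivAt t (hline t)
    exact h1.sub ((hasDerivAt_mul_const ⟪gradient φ x, h⟫))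
  have hbound : ∀ t ∈ Ico (0:ℝ) 1,
      ‖⟪gradient φ (x + t • h), h⟫ - ⟪gradient φ x, h⟫‖ ≤ L * ‖h‖ ^ 2 := by
    intro t ht
    have h1 : ⟪gradient φ (x + t • h), h⟫ - ⟪gradient φ x, h⟫
        = ⟪gradient φ (x + t • h) - gradient φ x, h⟫ := by
      rw [inner_sub_left]
    rw [h1]
    have h2 := abs_real_inner_le_norm (gradient φ (x + t • h) - gradient φ x) h
    have h3 : ‖gradient φ (x + t • h) - gradient φ x‖ ≤ L * (t * ‖h‖) := by
      have := hLip (x + t • h) x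
      simpa [norm_smul, abs_of_nonneg ht.1] using this
    have hL0 : 0 ≤ L * (t * ‖h‖) := le_trans (norm_nonneg _) h3
    calc ‖⟪gradient φ (x + t • h) - gradient φ x, h⟫‖
        ≤ ‖gradient φ (x + t • h) - gradient φ x‖ * ‖h‖ := h2
      _ ≤ (L * (t * ‖h‖)) * ‖h‖ := by
          exact mul_le_mul_of_nonneg_right h3 (norm_nonneg _)
      _ ≤ L * ‖h‖ ^ 2 := by nlinarith [mul_nonneg hL (sq_nonneg ‖h‖), ht.2.le, ht.1, sq_nonneg ‖h‖, hL]
  have key := norm_image_sub_le_of_norm_deriv_le_segment'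
    (f := χ) (f' := fun t => ⟪gradient φ (x + t • h), h⟫ - ⟪gradient φ x, h⟫)
    (a := 0) (b := 1)
    (fun t _ => (hd t).hasDerivWithinAt) hbound 1 (right_mem_Icc.2 zero_le_one)
  have e1 : χ 1 = φ (x + h) - ⟪gradient φ x, h⟫ := by simp [hχ]
  have e0 : χ 0 = φ x := by simp [hχ]
  rw [e1, e0] at key
  simpa [Real.norm_eq_abs, sub_sub, add_comm] using key


lemma pl_error_bound {E : Type*} [NormedAddCommGroup E] [InnerProductSpace ℝ E] [CompleteSpace E]
    (φ : E → ℝ) (hφ : Differentiable ℝ φ) (μ L M : ℝ) (hμ : 0 < μ) (hμL : μ ≤ L)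
    (hLip : ∀ x y, ‖gradient φ x - gradient φ y‖ ≤ L * ‖x - y‖)
    (hub : ∀ a, φ a ≤ M)
    (hPL : ∀ a, μ * (M - φ a) ≤ (1 / 2) * ‖gradient φ a‖ ^ 2)
    (a₀ : E) :
    ∃ b, φ b = M ∧ ‖a₀ - b‖ ≤
      (1 / (Real.sqrt L * (1 - Real.sqrt (1 - μ / (2 * L))))) * Real.sqrt (M - φ a₀) := by
  have hL : 0 < L := lt_of_lt_of_le hμ hμL
  set r : ℝ := 1 - μ / (2 * L) with hrdef
  have hr0 : 0 < r := by
    have : μ / (2 * L) < 1 := by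
      rw [div_lt_one (by linarith)]
      linarith
    simp only [hrdef]; linarith
  have hr1 : r < 1 := by
    have : 0 < μ / (2 * L) := div_pos hμ (by linarith)
    simp only [hrdef]; linarith
  have hsr1 : Real.sqrt r < 1 := by
    rw [show (1:ℝ) = Real.sqrt 1 by simp]
    exact Real.sqrt_lt_sqrt hr0.le hr1
  have hsr0 : 0 ≤ Real.sqrt r := Real.sqrt_nonneg r
  -- the ascent sequence
  set s : ℕ → E := fun k => Nat.rec a₀ (fun _ a => a + (1 / (2 * L)) • gradient φ a) k with hs
  have hstep : ∀ k, s (k + 1) = s k + (1 / (2 * L)) • gradient φ (s k) := fun k => rfl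
  -- one-step ascent gain
  have hgain : ∀ a : E, φ a + ‖gradient φ a‖ ^ 2 / (4 * L)
      ≤ φ (a + (1 / (2 * L)) • gradient φ a) := by
    intro a
    have hb := (abs_le.1 (taylor_bound φ hφ L hL.le hLip a
      ((1 / (2 * L)) • gradient φ a))).1
    have hInner : ⟪gradient φ a, (1 / (2 * L)) • gradient φ a⟫
        = (1 / (2 * L)) * ‖gradient φ a‖ ^ 2 := by
      rw [real_inner_smul_right, real_inner_self_eq_norm_sq]
    have hnorm : ‖(1 / (2 * L)) • gradient φ a‖ ^ 2
        = (1 / (2 * L)) ^ 2 * ‖gradient φ a‖ ^ 2 := by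
      rw [norm_smul]
      simp [mul_pow, abs_of_pos (by positivity : (0:ℝ) < 1 / (2 * L))]
    rw [hInner, hnorm] at hb
    have hLne : (L : ℝ) ≠ 0 := ne_of_gt hL
    have e1 : L * ((1 / (2 * L)) ^ 2 * ‖gradient φ a‖ ^ 2)
        = ‖gradient φ a‖ ^ 2 / (4 * L) := by field_simp; ring
    have e2 : 1 / (2 * L) * ‖gradient φ a‖ ^ 2
        = 2 * (‖gradient φ a‖ ^ 2 / (4 * L)) := by field_simp; ring
    rw [e1, e2] at hb
    linarith [hb]
  -- gap bounds
  have hgapnn : ∀ k, 0 ≤ M - φ (s k) := fun k => by linarith [hub (s k)]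
  have hgeo : ∀ k, M - φ (s k) ≤ r ^ k * (M - φ a₀) := by
    intro k
    induction k with
    | zero => simp [hs]
    | succ k ih =>
      have h1 := hgain (s k)
      rw [← hstep k] at h1
      have h2 := hPL (s k)
      have h3 : M - φ (s (k + 1)) ≤ r * (M - φ (s k)) := by
        have : μ * (M - φ (s k)) / (2 * L) ≤ ‖gradient φ (s k)‖ ^ 2 / (4 * L) := by
          rw [div_le_div_iff₀ (by linarith) (by linarith)]
          nlinarith
        have hr : r * (M - φ (s k)) = (M - φ (s k)) - μ * (M - φ (s k)) / (2 * L) := by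
          rw [hrdef]; field_simp
        rw [hr]
        linarith [h1, this]
      calc M - φ (s (k + 1)) ≤ r * (M - φ (s k)) := h3
        _ ≤ r * (r ^ k * (M - φ a₀)) := by
            exact mul_le_mul_of_nonneg_left ih hr0.le
        _ = r ^ (k + 1) * (M - φ a₀) := by ring
  -- step sizes are geometric
  have hdist : ∀ k, dist (s k) (s (k + 1))
      ≤ (Real.sqrt (M - φ a₀) / Real.sqrt L) * (Real.sqrt r) ^ k := by
    intro k
    have h1 := hgain (s k)
    rw [← hstep k] at h1
    have hnormsq : ‖gradient φ (s k)‖ ^ 2 ≤ 4 * L * (r ^ k * (M - φ a₀)) := by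
      have h4 : φ (s (k + 1)) ≤ M := hub _
      have h5 : ‖gradient φ (s k)‖ ^ 2 / (4 * L) ≤ r ^ k * (M - φ a₀) := by
        linarith [hgeo k]
      have h6 := mul_le_mul_of_nonneg_left h5 (by positivity : (0:ℝ) ≤ 4 * L)
      have h7 : 4 * L * (‖gradient φ (s k)‖ ^ 2 / (4 * L)) = ‖gradient φ (s k)‖ ^ 2 := by
        field_simp
      linarith [h6, h7]
    have : dist (s k) (s (k + 1)) = ‖gradient φ (s k)‖ / (2 * L) := by
      rw [dist_eq_norm', hstep k]
      simp only [add_sub_cancel_left, norm_smul, Real.norm_eq_abs]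
      rw [abs_of_pos (by positivity : (0:ℝ) < 1 / (2 * L))]
      ring
    rw [this]
    have hg0 : 0 ≤ M - φ a₀ := by linarith [hub a₀]
    have hRHSnn : 0 ≤ (Real.sqrt (M - φ a₀) / Real.sqrt L) * (Real.sqrt r) ^ k := by positivity
    rw [← pow_le_pow_iff_left₀ (by positivity) hRHSnn (two_ne_zero)]
    have eR : ((Real.sqrt (M - φ a₀) / Real.sqrt L) * (Real.sqrt r) ^ k) ^ 2
        = (M - φ a₀) / L * r ^ k := by
      rw [mul_pow, div_pow, pow_right_comm, Real.sq_sqrt hg0, Real.sq_sqrt hL.le,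
        Real.sq_sqrt hr0.le]
    rw [eR, div_pow]
    rw [div_le_iff₀ (by positivity)]
    have h2L : ((2:ℝ) * L) ^ 2 = 4 * L * L := by ring
    calc ‖gradient φ (s k)‖ ^ 2 ≤ 4 * L * (r ^ k * (M - φ a₀)) := hnormsq
      _ = (M - φ a₀) / L * r ^ k * (2 * L) ^ 2 := by field_simp; ring
  -- convergence
  have hcauchy : CauchySeq s :=
    cauchySeq_of_le_geometric (Real.sqrt r) _ hsr1 hdist
  obtain ⟨b, hb⟩ := cauchySeq_tendsto_of_complete hcauchy
  refine ⟨b, ?_, ?_⟩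
  · -- φ b = M
    have h1 : Tendsto (fun k => φ (s k)) atTop (𝓝 (φ b)) :=
      (hφ.continuous.tendsto b).comp hb
    have hlow : Tendsto (fun k : ℕ => M - (M - φ a₀) * r ^ k) atTop (𝓝 M) := by
      have := (tendsto_pow_atTop_nhds_zero_of_lt_one hr0.le hr1).const_mul (M - φ a₀)
      have h2 := tendsto_const_nhds.sub this (α := ℕ) (f := fun _ : ℕ => M)
      simpa using h2
    have h2 : Tendsto (fun k => φ (s k)) atTop (𝓝 M) := by
      refine tendsto_of_tendsto_of_tendsto_of_le_of_le hlow tendsto_const_nhds ?_ ?_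
      · intro k
        show M - (M - φ a₀) * r ^ k ≤ φ (s k)
        linarith [hgeo k, mul_comm (r ^ k) (M - φ a₀)]
      · intro k
        show φ (s k) ≤ M
        exact hub (s k)
    exact tendsto_nhds_unique h1 h2
  · have hfin := dist_le_of_le_geometric_of_tendsto₀ _ _ hsr1 hdist hb
    have hs0 : s 0 = a₀ := rfl
    rw [hs0, dist_eq_norm] at hfin
    have : Real.sqrt (M - φ a₀) / Real.sqrt L / (1 - Real.sqrt r)
        = 1 / (Real.sqrt L * (1 - Real.sqrt r)) * Real.sqrt (M - φ a₀) := by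
      field_simp
    rw [this] at hfin
    exact hfin

/-- Danskin-type result under the PL-game assumptions: the max-function
`g(θ) = max_α f(θ, α)` has gradient `∇g(θ) = ∇_θ f(θ, α)` at `θ`, for every
maximizer `α ∈ A(θ)`. -/
theorem danskin_gradient_of_max
    (m n : ℕ)
    (f : EuclideanSpace ℝ (Fin m) × EuclideanSpace ℝ (Fin n) → ℝ)
    (μ L₁₁ L₂₂ L₁₂ : ℝ) (g : EuclideanSpace ℝ (Fin m) → ℝ)
    (hμ : 0 < μ)
    (hf : ContDiff ℝ 2 f)
    (hL11 : ∀ (α : EuclideanSpace ℝ (Fin n)) (θ₁ θ₂ : EuclideanSpace ℝ (Fin m)),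
      ‖gradient (fun t => f (t, α)) θ₁ - gradient (fun t => f (t, α)) θ₂‖ ≤ L₁₁ * ‖θ₁ - θ₂‖)
    (hL22 : ∀ (θ : EuclideanSpace ℝ (Fin m)) (α₁ α₂ : EuclideanSpace ℝ (Fin n)),
      ‖gradient (fun a => f (θ, a)) α₁ - gradient (fun a => f (θ, a)) α₂‖ ≤ L₂₂ * ‖α₁ - α₂‖)
    (hL12a : ∀ (α : EuclideanSpace ℝ (Fin n)) (θ₁ θ₂ : EuclideanSpace ℝ (Fin m)),
      ‖gradient (fun a => f (θ₁, a)) α - gradient (fun a => f (θ₂, a)) α‖ ≤ L₁₂ * ‖θ₁ - θ₂‖)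
    (hL12b : ∀ (θ : EuclideanSpace ℝ (Fin m)) (α₁ α₂ : EuclideanSpace ℝ (Fin n)),
      ‖gradient (fun t => f (t, α₁)) θ - gradient (fun t => f (t, α₂)) θ‖ ≤ L₁₂ * ‖α₁ - α₂‖)
    (hub : ∀ θ α, f (θ, α) ≤ g θ)
    (hattained : ∀ θ, ∃ α, f (θ, α) = g θ)
    (hclosed : ∀ θ, IsClosed {α | f (θ, α) = g θ})
    (hPL : ∀ θ α, μ * (g θ - f (θ, α)) ≤ (1 / 2) * ‖gradient (fun a => f (θ, a)) α‖ ^ 2) :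
    ∀ (θ : EuclideanSpace ℝ (Fin m)) (α : EuclideanSpace ℝ (Fin n)),
      f (θ, α) = g θ →
      HasGradientAt g (gradient (fun t => f (t, α)) θ) θ := by
  intro θ₀ α hα
  have hfd : Differentiable ℝ f := hf.differentiable (by norm_num)
  have hdiffθ : ∀ b : EuclideanSpace ℝ (Fin n), Differentiable ℝ (fun t => f (t, b)) :=
    fun b => hfd.comp (differentiable_id.prodMk (differentiable_const b))
  have hdiffα : ∀ θ : EuclideanSpace ℝ (Fin m), Differentiable ℝ (fun a => f (θ, a)) :=
    fun θ => hfd.comp ((differentiable_const θ).prodMk differentiable_id)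
  have hL11' : ∀ (b : EuclideanSpace ℝ (Fin n)) θ₁ θ₂,
      ‖gradient (fun t => f (t, b)) θ₁ - gradient (fun t => f (t, b)) θ₂‖
        ≤ |L₁₁| * ‖θ₁ - θ₂‖ := fun b θ₁ θ₂ =>
    (hL11 b θ₁ θ₂).trans (mul_le_mul_of_nonneg_right (le_abs_self _) (norm_nonneg _))
  have hL12a' : ∀ (b : EuclideanSpace ℝ (Fin n)) θ₁ θ₂,
      ‖gradient (fun a => f (θ₁, a)) b - gradient (fun a => f (θ₂, a)) b‖
        ≤ |L₁₂| * ‖θ₁ - θ₂‖ := fun b θ₁ θ₂ =>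
    (hL12a b θ₁ θ₂).trans (mul_le_mul_of_nonneg_right (le_abs_self _) (norm_nonneg _))
  have hL12b' : ∀ (θ : EuclideanSpace ℝ (Fin m)) α₁ α₂,
      ‖gradient (fun t => f (t, α₁)) θ - gradient (fun t => f (t, α₂)) θ‖
        ≤ |L₁₂| * ‖α₁ - α₂‖ := fun θ α₁ α₂ =>
    (hL12b θ α₁ α₂).trans (mul_le_mul_of_nonneg_right (le_abs_self _) (norm_nonneg _))
  set L : ℝ := max |L₂₂| μ with hLdef
  have hLpos : 0 < L := lt_of_lt_of_le hμ (le_max_right _ _)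
  have hLip : ∀ (θ : EuclideanSpace ℝ (Fin m)) x y,
      ‖gradient (fun a => f (θ, a)) x - gradient (fun a => f (θ, a)) y‖ ≤ L * ‖x - y‖ := by
    intro θ x y
    refine (hL22 θ x y).trans (mul_le_mul_of_nonneg_right ?_ (norm_nonneg _))
    exact (le_abs_self _).trans (le_max_left _ _)
  set v := gradient (fun t => f (t, α)) θ₀ with hv
  -- α is a critical point of f (θ₀, ·)
  have hlm : IsLocalMax (fun a => f (θ₀, a)) α :=
    Filter.Eventually.of_forall (fun a => le_of_le_of_eq (hub θ₀ a) hα.symm)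
  have hcrit : gradient (fun a => f (θ₀, a)) α = 0 := by
    have h0 : gradient (fun a => f (θ₀, a)) α
        = (InnerProductSpace.toDual ℝ _).symm (fderiv ℝ (fun a => f (θ₀, a)) α) := rfl
    rw [h0, hlm.fderiv_eq_zero, map_zero]
  -- constants
  have hsrlt : Real.sqrt (1 - μ / (2 * L)) < 1 := by
    have h1 : μ / (2 * L) > 0 := by positivity
    have : (1 : ℝ) - μ / (2 * L) < 1 := by linarith
    calc Real.sqrt (1 - μ / (2 * L)) < Real.sqrt 1 := by
          apply Real.sqrt_lt_sqrt ?_ this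
          · have h2 : μ / (2 * L) < 1 := by
              rw [div_lt_one (by positivity)]
              have : μ ≤ L := le_max_right _ _
              linarith
            linarith
      _ = 1 := Real.sqrt_one
  set Cst : ℝ := 1 / (Real.sqrt L * (1 - Real.sqrt (1 - μ / (2 * L)))) with hCstdef
  have hCst : 0 ≤ Cst := by
    apply le_of_lt
    apply one_div_pos.2
    exact mul_pos (Real.sqrt_pos.2 hLpos) (by linarith)
  set D : ℝ := Cst * |L₁₂| / Real.sqrt (2 * μ) with hDdef
  have hD : 0 ≤ D := by positivity
  set K : ℝ := |L₁₁| + |L₁₂| * D with hKdef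
  have hK : 0 ≤ K := by positivity
  have key : ∀ θ' : EuclideanSpace ℝ (Fin m),
      |g θ' - g θ₀ - ⟪v, θ' - θ₀⟫| ≤ K * ‖θ' - θ₀‖ ^ 2 := by
    intro θ'
    have hθ'eq : θ₀ + (θ' - θ₀) = θ' := by abel
    -- lower bound
    have hlow := (abs_le.1 (taylor_bound (fun t => f (t, α)) (hdiffθ α) |L₁₁|
      (abs_nonneg _) (hL11' α) θ₀ (θ' - θ₀))).1
    rw [hθ'eq] at hlow
    -- small gradient of f (θ', ·) at α
    have hgsmall : ‖gradient (fun a => f (θ', a)) α‖ ≤ |L₁₂| * ‖θ' - θ₀‖ := by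
      have h1 := hL12a' α θ' θ₀
      rwa [hcrit, sub_zero] at h1
    -- gap bound at θ'
    have hgapnn : 0 ≤ g θ' - f (θ', α) := by linarith [hub θ' α]
    have hgap : g θ' - f (θ', α) ≤ (|L₁₂| * ‖θ' - θ₀‖) ^ 2 / (2 * μ) := by
      have h1 := hPL θ' α
      have h2 : ‖gradient (fun a => f (θ', a)) α‖ ^ 2 ≤ (|L₁₂| * ‖θ' - θ₀‖) ^ 2 :=
        pow_le_pow_left₀ (norm_nonneg _) hgsmall 2
      rw [le_div_iff₀ (by positivity)]
      nlinarith [h1, h2]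
    -- error bound: nearby maximizer b at θ'
    obtain ⟨b, hbmax, hbdist⟩ := pl_error_bound (fun a => f (θ', a)) (hdiffα θ')
      μ L (g θ') hμ (le_max_right _ _) (hLip θ') (hub θ') (hPL θ') α
    have hsqrtgap : Real.sqrt (g θ' - f (θ', α))
        ≤ |L₁₂| * ‖θ' - θ₀‖ / Real.sqrt (2 * μ) := by
      have h1 := Real.sqrt_le_sqrt hgap
      rwa [Real.sqrt_div (by positivity) (2 * μ),
        Real.sqrt_sq (by positivity : (0:ℝ) ≤ |L₁₂| * ‖θ' - θ₀‖)] at h1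
    have hab : ‖α - b‖ ≤ D * ‖θ' - θ₀‖ := by
      calc ‖α - b‖ ≤ Cst * Real.sqrt (g θ' - f (θ', α)) := hbdist
        _ ≤ Cst * (|L₁₂| * ‖θ' - θ₀‖ / Real.sqrt (2 * μ)) :=
            mul_le_mul_of_nonneg_left hsqrtgap hCst
        _ = D * ‖θ' - θ₀‖ := by rw [hDdef]; ring
    -- upper bound
    have hupper := (abs_le.1 (taylor_bound (fun t => f (t, b)) (hdiffθ b) |L₁₁|
      (abs_nonneg _) (hL11' b) θ₀ (θ' - θ₀))).2
    rw [hθ'eq] at hupper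
    have hvb : ‖gradient (fun t => f (t, b)) θ₀ - v‖ ≤ |L₁₂| * (D * ‖θ' - θ₀‖) := by
      have h1 := hL12b' θ₀ b α
      have h2 : ‖b - α‖ = ‖α - b‖ := norm_sub_rev _ _
      rw [hv]
      calc ‖gradient (fun t => f (t, b)) θ₀ - gradient (fun t => f (t, α)) θ₀‖
          ≤ |L₁₂| * ‖b - α‖ := h1
        _ = |L₁₂| * ‖α - b‖ := by rw [h2]
        _ ≤ |L₁₂| * (D * ‖θ' - θ₀‖) := mul_le_mul_of_nonneg_left hab (abs_nonneg _)
    have hinn : ⟪gradient (fun t => f (t, b)) θ₀, θ' - θ₀⟫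
        ≤ ⟪v, θ' - θ₀⟫ + |L₁₂| * (D * ‖θ' - θ₀‖) * ‖θ' - θ₀‖ := by
      have h1 := real_inner_le_norm (gradient (fun t => f (t, b)) θ₀ - v) (θ' - θ₀)
      have h2 := mul_le_mul_of_nonneg_right hvb (norm_nonneg (θ' - θ₀))
      rw [inner_sub_left] at h1
      linarith
    rw [abs_le]
    constructor
    · -- lower
      have h1 : f (θ', α) ≤ g θ' := hub θ' α
      have hKsq : |L₁₁| * ‖θ' - θ₀‖ ^ 2 ≤ K * ‖θ' - θ₀‖ ^ 2 := by
        apply mul_le_mul_of_nonneg_right _ (sq_nonneg _)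
        rw [hKdef]
        nlinarith [abs_nonneg L₁₂, hD]
      linarith [hlow, hα]
    · -- upper
      have h1 : f (θ₀, b) ≤ g θ₀ := hub θ₀ b
      have h2 : g θ' = f (θ', b) := hbmax.symm
      have hKexp : K * ‖θ' - θ₀‖ ^ 2
          = |L₁₁| * ‖θ' - θ₀‖ ^ 2 + |L₁₂| * (D * ‖θ' - θ₀‖) * ‖θ' - θ₀‖ := by
        rw [hKdef]; ring
      linarith [hupper, hinn]
  -- conclude
  rw [hasGradientAt_iff_isLittleO, Asymptotics.isLittleO_iff]
  intro c hc
  have hδ : 0 < c / (K + 1) := by positivity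
  filter_upwards [Metric.ball_mem_nhds θ₀ hδ] with θ' hmem
  have h1 := key θ'
  have h2 : ‖θ' - θ₀‖ < c / (K + 1) := by rwa [Metric.mem_ball, dist_eq_norm] at hmem
  have h3 : (K + 1) * ‖θ' - θ₀‖ ≤ c := by
    rw [← le_div_iff₀' (by positivity : (0:ℝ) < K + 1)]
    exact h2.le
  calc |g θ' - g θ₀ - ⟪v, θ' - θ₀⟫| ≤ K * ‖θ' - θ₀‖ ^ 2 := h1
    _ ≤ c * ‖θ' - θ₀‖ := by
        nlinarith [mul_le_mul_of_nonneg_right h3 (norm_nonneg (θ' - θ₀)),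
          sq_nonneg ‖θ' - θ₀‖, norm_nonneg (θ' - θ₀)]
  -- align abs with norm of the vector argument
end

section
/- Let h : ℝⁿ → ℝ be μ-PL and L-smooth with attained minimum value h* = min h. If x_{k+1} = x_k − (1/L)∇h(x_k) for k = 0, …, K−1 starting from x₀, then h(x_K) − h* ≤ (1 − μ/L)^K (h(x₀) − h*). -/
open scoped InnerProductSpace

lemma descent_lemma (d : ℕ) (h : EuclideanSpace ℝ (Fin d) → ℝ) (L : ℝ) (hL : 0 < L)
    (hdiff : Differentiable ℝ h)
    (hsmooth : ∀ x y, ‖gradient h x - gradient h y‖ ≤ L * ‖x - y‖)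
    (x v : EuclideanSpace ℝ (Fin d)) :
    h (x + v) ≤ h x + ⟪gradient h x, v⟫_ℝ + L / 2 * ‖v‖ ^ 2 := by
  set g := gradient h with hg
  have hline : ∀ t : ℝ, HasDerivAt (fun s : ℝ => x + s • v) v t := fun t => by
    simpa using ((hasDerivAt_id t).smul_const v).const_add x
  have hcomp : ∀ t : ℝ, HasDerivAt (fun s : ℝ => h (x + s • v)) ⟪g (x + t • v), v⟫_ℝ t := by
    intro t
    have hf : HasFDerivAt h (InnerProductSpace.toDual ℝ _ (g (x + t • v))) (x + t • v) :=
      (hdiff (x + t • v)).hasGradientAt.hasFDerivAt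
    have := hf.comp_hasDerivAt t (hline t)
    simp only [InnerProductSpace.toDual_apply_apply] at this
    exact this
  set φ : ℝ → ℝ := fun t => h (x + t • v) - t * ⟪g x, v⟫_ℝ - L * t ^ 2 / 2 * ‖v‖ ^ 2 with hφ
  have hφ' : ∀ t : ℝ, HasDerivAt φ
      (⟪g (x + t • v), v⟫_ℝ - ⟪g x, v⟫_ℝ - L * t * ‖v‖ ^ 2) t := by
    intro t
    have h1 : HasDerivAt (fun s : ℝ => s * ⟪g x, v⟫_ℝ) ⟪g x, v⟫_ℝ t := by
      simpa using (hasDerivAt_id t).mul_const ⟪g x, v⟫_ℝ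
    have h2 : HasDerivAt (fun s : ℝ => L * s ^ 2 / 2 * ‖v‖ ^ 2) (L * t * ‖v‖ ^ 2) t := by
      have := (((hasDerivAt_pow 2 t).const_mul L).div_const 2).mul_const (‖v‖ ^ 2)
      exact this.congr_deriv (by push_cast; ring)
    exact ((hcomp t).sub h1).sub h2
  have hder_nonpos : ∀ t ∈ Set.Ioo (0:ℝ) 1, deriv φ t ≤ 0 := by
    intro t ht
    rw [(hφ' t).deriv]
    have h1 : ⟪g (x + t • v) - g x, v⟫_ℝ ≤ ‖g (x + t • v) - g x‖ * ‖v‖ :=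
      real_inner_le_norm _ _
    have h2 : ‖g (x + t • v) - g x‖ ≤ L * (t * ‖v‖) := by
      have := hsmooth (x + t • v) x
      simpa [norm_smul, abs_of_pos ht.1] using this
    have h3 : ‖g (x + t • v) - g x‖ * ‖v‖ ≤ L * (t * ‖v‖) * ‖v‖ :=
      mul_le_mul_of_nonneg_right h2 (norm_nonneg v)
    have := h1.trans h3
    rw [inner_sub_left] at this
    nlinarith
  have hanti : AntitoneOn φ (Set.Icc 0 1) := by
    apply antitoneOn_of_deriv_nonpos (convex_Icc 0 1)
    · exact fun t _ => ((hφ' t).differentiableAt.continuousAt).continuousWithinAt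
    · intro t ht
      exact (hφ' t).differentiableAt.differentiableWithinAt
    · intro t ht
      exact hder_nonpos t (by simpa [interior_Icc] using ht)
  have := hanti (Set.left_mem_Icc.2 zero_le_one) (Set.right_mem_Icc.2 zero_le_one) zero_le_one
  simp only [hφ, one_smul, zero_smul, add_zero, one_pow, zero_pow, one_mul, zero_mul,
    mul_zero, sub_zero] at this
  nlinarith [this]

/-- Linear convergence of gradient descent for `μ`-PL, `L`-smooth functions:
if `x_{k+1} = x_k - (1/L) ∇h(x_k)`, then
`h(x_K) - h* ≤ (1 - μ/L)^K (h(x₀) - h*)`. -/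
theorem gradient_descent_PL_linear_convergence
    (d : ℕ) (h : EuclideanSpace ℝ (Fin d) → ℝ) (μ L hstar : ℝ)
    (hμ : 0 < μ) (hL : 0 < L) (hμL : μ ≤ L)
    (hdiff : Differentiable ℝ h)
    (hsmooth : ∀ x y, ‖gradient h x - gradient h y‖ ≤ L * ‖x - y‖)
    (hlb : ∀ x, hstar ≤ h x)
    (hattained : ∃ x, h x = hstar)
    (hPL : ∀ x, μ * (h x - hstar) ≤ (1 / 2) * ‖gradient h x‖ ^ 2)
    (x : ℕ → EuclideanSpace ℝ (Fin d))
    (hiter : ∀ k, x (k + 1) = x k - (1 / L) • gradient h (x k)) :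
    ∀ K : ℕ, h (x K) - hstar ≤ (1 - μ / L) ^ K * (h (x 0) - hstar) := by
  have step : ∀ k, h (x (k + 1)) - hstar ≤ (1 - μ / L) * (h (x k) - hstar) := by
    intro k
    set g := gradient h (x k) with hgdef
    have hd := descent_lemma d h L hL hdiff hsmooth (x k) ((-(1 / L)) • g)
    have hxE : x k + (-(1 / L)) • g = x (k + 1) := by
      rw [hiter k, neg_smul, sub_eq_add_neg]
    rw [hxE] at hd
    have hinner : ⟪g, (-(1 / L)) • g⟫_ℝ = -(1 / L) * ‖g‖ ^ 2 := by
      rw [real_inner_smul_right, real_inner_self_eq_norm_sq]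
    have hnorm : ‖(-(1 / L)) • g‖ ^ 2 = (1 / L) ^ 2 * ‖g‖ ^ 2 := by
      rw [norm_smul, Real.norm_eq_abs, abs_neg, abs_of_pos (by positivity : (0:ℝ) < 1/L), mul_pow]
    have hd2 : h (x (k + 1)) ≤ h (x k) - 1 / (2 * L) * ‖g‖ ^ 2 := by
      rw [hinner, hnorm] at hd
      have hc : -(1 / L) * ‖g‖ ^ 2 + L / 2 * ((1 / L) ^ 2 * ‖g‖ ^ 2) = -(1 / (2 * L) * ‖g‖ ^ 2) := by
        field_simp
        ring
      linarith [hd, hc]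
    have hpl := hPL (x k)
    have key : μ / L * (h (x k) - hstar) ≤ 1 / (2 * L) * ‖g‖ ^ 2 := by
      have h1 := mul_le_mul_of_nonneg_left hpl (show (0:ℝ) ≤ 1 / L by positivity)
      calc μ / L * (h (x k) - hstar) = 1 / L * (μ * (h (x k) - hstar)) := by ring
        _ ≤ 1 / L * (1 / 2 * ‖g‖ ^ 2) := h1
        _ = 1 / (2 * L) * ‖g‖ ^ 2 := by ring
    have hexp : (1 - μ / L) * (h (x k) - hstar)
        = (h (x k) - hstar) - μ / L * (h (x k) - hstar) := by ring
    rw [hexp]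
    linarith [hd2, key]
  intro K
  induction K with
  | zero => simp
  | succ k ih =>
    have h1 : (0:ℝ) ≤ 1 - μ / L := by
      have : μ / L ≤ 1 := (div_le_one hL).2 hμL
      linarith
    calc h (x (k + 1)) - hstar ≤ (1 - μ / L) * (h (x k) - hstar) := step k
      _ ≤ (1 - μ / L) * ((1 - μ / L) ^ k * (h (x 0) - hstar)) :=
          mul_le_mul_of_nonneg_left ih h1
      _ = (1 - μ / L) ^ (k + 1) * (h (x 0) - hstar) := by ring
end

section
/- Let g : ℝᵐ → ℝ be differentiable with L-Lipschitz gradient (L > 0), bounded below with infimum g*, and let Δ_g ≥ g(θ₀) − g*. Suppose θ_{t+1} = θ_t − (1/L) G_t for t = 0, …, T−1 where ‖G_t − ∇g(θ_t)‖ ≤ δ for all t. Then (1/T) Σ_{t=0}^{T−1} ‖∇g(θ_t)‖² ≤ δ² + 2LΔ_g/T. -/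
open scoped RealInnerProductSpace

lemma descent_aux {m : ℕ} (g : EuclideanSpace ℝ (Fin m) → ℝ) (L : ℝ)
    (hdiff : Differentiable ℝ g)
    (hsmooth : ∀ x y, ‖gradient g x - gradient g y‖ ≤ L * ‖x - y‖)
    (x v : EuclideanSpace ℝ (Fin m)) :
    g (x + v) ≤ g x + ⟪gradient g x, v⟫ + L / 2 * ‖v‖ ^ 2 := by
  set φ : ℝ → ℝ := fun s => g (x + s • v) - s * ⟪gradient g x, v⟫ - L / 2 * s ^ 2 * ‖v‖ ^ 2 with hφdef
  have key : ∀ s : ℝ, HasDerivAt (fun s : ℝ => g (x + s • v)) ⟪gradient g (x + s • v), v⟫ s := by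
    intro s
    have h1 : HasFDerivAt g ((InnerProductSpace.toDual ℝ _) (gradient g (x + s • v))) (x + s • v) :=
      (hdiff _).hasGradientAt.hasFDerivAt
    have h2 : HasDerivAt (fun s : ℝ => x + s • v) v s := by
      simpa using ((hasDerivAt_id s).smul_const v).const_add x
    exact h1.comp_hasDerivAt s h2
  have hφ : ∀ s : ℝ, HasDerivAt φ
      (⟪gradient g (x + s • v), v⟫ - ⟪gradient g x, v⟫ - L * s * ‖v‖ ^ 2) s := by
    intro s
    have h3 : HasDerivAt (fun s : ℝ => s * ⟪gradient g x, v⟫) ⟪gradient g x, v⟫ s := by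
      simpa using (hasDerivAt_id s).mul_const ⟪gradient g x, v⟫
    have h4 : HasDerivAt (fun s : ℝ => L / 2 * s ^ 2 * ‖v‖ ^ 2) (L * s * ‖v‖ ^ 2) s := by
      have := ((hasDerivAt_pow 2 s).const_mul (L / 2)).mul_const (‖v‖ ^ 2)
      rw [show L * s * ‖v‖ ^ 2 = L / 2 * (((2:ℕ):ℝ) * s ^ (2 - 1)) * ‖v‖ ^ 2 by push_cast; ring]
      exact this
    exact ((key s).sub h3).sub h4
  have hanti : AntitoneOn φ (Set.Icc (0 : ℝ) 1) := by
    apply antitoneOn_of_deriv_nonpos (convex_Icc 0 1)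
    · exact (fun s _ => ((hφ s).differentiableAt).continuousAt.continuousWithinAt)
    · intro s hs
      exact ((hφ s).differentiableAt).differentiableWithinAt
    · intro s hs
      rw [interior_Icc] at hs
      rw [(hφ s).deriv]
      have h5 : ⟪gradient g (x + s • v) - gradient g x, v⟫ ≤ L * s * ‖v‖ ^ 2 := by
        calc ⟪gradient g (x + s • v) - gradient g x, v⟫
            ≤ ‖gradient g (x + s • v) - gradient g x‖ * ‖v‖ := real_inner_le_norm _ _
          _ ≤ (L * ‖(x + s • v) - x‖) * ‖v‖ :=
              mul_le_mul_of_nonneg_right (hsmooth _ _) (norm_nonneg _)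
          _ = L * s * ‖v‖ ^ 2 := by
              rw [add_sub_cancel_left, norm_smul, Real.norm_eq_abs, abs_of_pos hs.1]
              ring
      rw [inner_sub_left] at h5
      linarith
  have h01 : φ 1 ≤ φ 0 := hanti (Set.left_mem_Icc.mpr zero_le_one)
    (Set.right_mem_Icc.mpr zero_le_one) zero_le_one
  simp only [hφdef, one_smul, zero_smul, add_zero, one_pow, one_mul, zero_mul, sub_zero,
    mul_zero, ne_eq, OfNat.ofNat_ne_zero, not_false_eq_true, zero_pow] at h01
  linarith

/-- Average gradient norm bound for inexact gradient descent: if `g` is `L`-smooth and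
bounded below by `gstar`, `g(θ₀) - gstar ≤ Δ_g`, and `θ_{t+1} = θ_t - (1/L) G_t` with
`‖G_t - ∇g(θ_t)‖ ≤ δ`, then `(1/T) Σ_{t<T} ‖∇g(θ_t)‖² ≤ δ² + 2LΔ_g/T`. -/
theorem inexact_gradient_descent_avg_bound
    (m : ℕ) (g : EuclideanSpace ℝ (Fin m) → ℝ) (L gstar Δg δ : ℝ)
    (hL : 0 < L) (hδ : 0 ≤ δ)
    (hdiff : Differentiable ℝ g)
    (hsmooth : ∀ x y, ‖gradient g x - gradient g y‖ ≤ L * ‖x - y‖)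
    (hlb : ∀ x, gstar ≤ g x)
    (θ : ℕ → EuclideanSpace ℝ (Fin m)) (G : ℕ → EuclideanSpace ℝ (Fin m))
    (hinit : g (θ 0) - gstar ≤ Δg)
    (herr : ∀ t, ‖G t - gradient g (θ t)‖ ≤ δ)
    (hiter : ∀ t, θ (t + 1) = θ t - (1 / L) • G t)
    (T : ℕ) (hT : 0 < T) :
    (1 / (T : ℝ)) * ∑ t ∈ Finset.range T, ‖gradient g (θ t)‖ ^ 2 ≤
      δ ^ 2 + 2 * L * Δg / (T : ℝ) := by
  have hL' : L ≠ 0 := ne_of_gt hL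
  have step : ∀ t, ‖gradient g (θ t)‖ ^ 2 ≤ 2 * L * (g (θ t) - g (θ (t + 1))) + δ ^ 2 := by
    intro t
    set p := gradient g (θ t) with hp
    set e := G t - p with he
    have hG : G t = p + e := by rw [he]; abel
    have hθ : θ (t + 1) = θ t + (-(1 / L)) • G t := by
      rw [hiter t, neg_smul, sub_eq_add_neg]
    have h := descent_aux g L hdiff hsmooth (θ t) ((-(1 / L)) • G t)
    rw [← hθ, ← hp] at h
    have hip : ⟪p, (-(1 / L)) • G t⟫ = -(1 / L) * (‖p‖ ^ 2 + ⟪p, e⟫) := by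
      rw [real_inner_smul_right, hG, inner_add_right, real_inner_self_eq_norm_sq]
    have hnorm : ‖(-(1 / L)) • G t‖ ^ 2 = (1 / L) ^ 2 * (‖p‖ ^ 2 + 2 * ⟪p, e⟫ + ‖e‖ ^ 2) := by
      rw [norm_smul, hG, mul_pow, norm_add_sq_real]
      simp [abs_of_pos (by positivity : (0:ℝ) < 1 / L)]
    rw [hip, hnorm] at h
    have heq : g (θ t) + -(1 / L) * (‖p‖ ^ 2 + ⟪p, e⟫) +
        L / 2 * ((1 / L) ^ 2 * (‖p‖ ^ 2 + 2 * ⟪p, e⟫ + ‖e‖ ^ 2)) =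
        g (θ t) - ‖p‖ ^ 2 / (2 * L) + ‖e‖ ^ 2 / (2 * L) := by
      field_simp
      ring
    rw [heq] at h
    have hb : ‖e‖ ^ 2 ≤ δ ^ 2 := by
      have := herr t
      rw [← he] at this
      nlinarith [norm_nonneg e]
    have h2L : (0:ℝ) < 2 * L := by linarith
    have hmul := mul_le_mul_of_nonneg_left h (le_of_lt h2L)
    have e1 : 2 * L * (g (θ t) - ‖p‖ ^ 2 / (2 * L) + ‖e‖ ^ 2 / (2 * L)) =
        2 * L * g (θ t) - ‖p‖ ^ 2 + ‖e‖ ^ 2 := by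
      field_simp
    rw [e1] at hmul
    nlinarith
  have hsum : ∑ t ∈ Finset.range T, ‖gradient g (θ t)‖ ^ 2 ≤
      2 * L * (g (θ 0) - g (θ T)) + T * δ ^ 2 := by
    calc ∑ t ∈ Finset.range T, ‖gradient g (θ t)‖ ^ 2
        ≤ ∑ t ∈ Finset.range T, (2 * L * (g (θ t) - g (θ (t + 1))) + δ ^ 2) :=
          Finset.sum_le_sum fun t _ => step t
      _ = 2 * L * (g (θ 0) - g (θ T)) + T * δ ^ 2 := by
          rw [Finset.sum_add_distrib, ← Finset.mul_sum, Finset.sum_range_sub',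
            Finset.sum_const, Finset.card_range, nsmul_eq_mul]
  have hΔ : g (θ 0) - g (θ T) ≤ Δg := by
    have := hlb (θ T)
    linarith
  have hS : ∑ t ∈ Finset.range T, ‖gradient g (θ t)‖ ^ 2 ≤ 2 * L * Δg + T * δ ^ 2 := by
    have := mul_le_mul_of_nonneg_left hΔ (by linarith : (0:ℝ) ≤ 2 * L)
    linarith
  have hTpos : (0:ℝ) < T := by exact_mod_cast hT
  calc (1 / (T : ℝ)) * ∑ t ∈ Finset.range T, ‖gradient g (θ t)‖ ^ 2
      ≤ (1 / (T : ℝ)) * (2 * L * Δg + T * δ ^ 2) :=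
        mul_le_mul_of_nonneg_left hS (by positivity)
    _ = δ ^ 2 + 2 * L * Δg / (T : ℝ) := by
        field_simp
        ring
end

section
/- Under the PL-game assumptions with cross-Lipschitz constant L₁₂, for any θ₁, θ₂ and any α₁ ∈ A(θ₁), the suboptimality of α₁ at θ₂ is bounded by g(θ₂) − f(θ₂, α₁) ≤ (L₁₂²/(2μ)) ‖θ₁ − θ₂‖². -/
/-- Suboptimality bound for a maximizer at a nearby point: if `α₁ ∈ A(θ₁)` is a
maximizer of `f(θ₁, ·)`, then its suboptimality at `θ₂` satisfies
`g(θ₂) - f(θ₂, α₁) ≤ (L₁₂² / (2μ)) ‖θ₁ - θ₂‖²`. -/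
theorem argmax_suboptimality_bound
    (m n : ℕ)
    (f : EuclideanSpace ℝ (Fin m) × EuclideanSpace ℝ (Fin n) → ℝ)
    (μ L₁₂ : ℝ) (g : EuclideanSpace ℝ (Fin m) → ℝ)
    (hμ : 0 < μ)
    (hf : ContDiff ℝ 1 f)
    (hcross : ∀ (α : EuclideanSpace ℝ (Fin n)) (θ₁ θ₂ : EuclideanSpace ℝ (Fin m)),
      ‖gradient (fun a => f (θ₁, a)) α - gradient (fun a => f (θ₂, a)) α‖ ≤ L₁₂ * ‖θ₁ - θ₂‖)
    (hub : ∀ θ α, f (θ, α) ≤ g θ)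
    (hattained : ∀ θ, ∃ α, f (θ, α) = g θ)
    (hPL : ∀ θ α, μ * (g θ - f (θ, α)) ≤ (1 / 2) * ‖gradient (fun a => f (θ, a)) α‖ ^ 2) :
    ∀ (θ₁ θ₂ : EuclideanSpace ℝ (Fin m)) (α₁ : EuclideanSpace ℝ (Fin n)),
      f (θ₁, α₁) = g θ₁ →
      g θ₂ - f (θ₂, α₁) ≤ (L₁₂ ^ 2 / (2 * μ)) * ‖θ₁ - θ₂‖ ^ 2 := by
  intro θ₁ θ₂ α₁ hmax
  -- α₁ is a global max of a ↦ f (θ₁, a), so the gradient vanishes there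
  have hdiff : Differentiable ℝ (fun a : EuclideanSpace ℝ (Fin n) => f (θ₁, a)) := by
    have : Differentiable ℝ f := hf.differentiable one_ne_zero
    exact this.comp (Differentiable.prodMk (differentiable_const θ₁) differentiable_id)
  have hloc : IsLocalMax (fun a : EuclideanSpace ℝ (Fin n) => f (θ₁, a)) α₁ := by
    apply Filter.Eventually.of_forall
    intro a
    simpa [hmax] using hub θ₁ a
  have hgrad0 : gradient (fun a : EuclideanSpace ℝ (Fin n) => f (θ₁, a)) α₁ = 0 := by
    have hfd : fderiv ℝ (fun a : EuclideanSpace ℝ (Fin n) => f (θ₁, a)) α₁ = 0 :=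
      hloc.fderiv_eq_zero
    simp [gradient, hfd]
  -- apply PL at (θ₂, α₁) and the cross-Lipschitz bound
  have hc := hcross α₁ θ₁ θ₂
  rw [hgrad0, zero_sub, norm_neg] at hc
  have hsq : ‖gradient (fun a => f (θ₂, a)) α₁‖ ^ 2 ≤ (L₁₂ * ‖θ₁ - θ₂‖) ^ 2 :=
    pow_le_pow_left₀ (norm_nonneg _) hc 2
  have h1 := (hPL θ₂ α₁).trans (by linarith : (1 / 2) * ‖gradient (fun a => f (θ₂, a)) α₁‖ ^ 2
    ≤ (1 / 2) * (L₁₂ * ‖θ₁ - θ₂‖) ^ 2)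
  rw [div_mul_eq_mul_div, le_div_iff₀ (by linarith : (0:ℝ) < 2 * μ)]
  nlinarith [h1]
end
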